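/- For all r, if G is a connected graph admitting a tree-decomposition (T,(B_t)) such that every bag B_t has diameter at most r in G, then G admits a (1, 6r+1)-quasi-isometry to a tree. -/

import Mathlib

open SimpleGraph Set

/-- `φ` is an `(L,C)`-quasi-isometry from `G` to `H`. -/
def IsQuasiIsometry {V W : Type} (G : SimpleGraph V) (H : SimpleGraph W)
    (L C : ℕ) (φ : V → W) : Prop :=
  (∀ u v : V, G.edist u v ≠ ⊤ →
      H.edist (φ u) (φ v) ≤ L * G.edist u v + C) ∧
  (∀ u v : V, H.edist (φ u) (φ v) ≠ ⊤ →
      G.edist u v ≤ L * H.edist (φ u) (φ v) + C) ∧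
  (∀ y : W, ∃ v : V, H.edist (φ v) y ≤ C)

/-- `(T, B)` is a tree-decomposition of `G`. -/
structure IsTreeDecomp {V τ : Type} (G : SimpleGraph V) (T : SimpleGraph τ)
    (B : τ → Set V) : Prop where
  isTree : T.IsTree
  covers : ∀ v : V, ∃ t, v ∈ B t
  edges : ∀ u v : V, G.Adj u v → ∃ t, u ∈ B t ∧ v ∈ B t
  interp : ∀ t₁ t₂ t₃ : τ, ∀ p : T.Walk t₁ t₃, p.IsPath → t₂ ∈ p.support →
    B t₁ ∩ B t₃ ⊆ B t₂

/-- `(T, B)` is a pseudo-tree-decomposition of `G`. -/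
structure IsPseudoTreeDecomp {V τ : Type} (G : SimpleGraph V) (T : SimpleGraph τ)
    (B : τ → Set V) : Prop where
  isTree : T.IsTree
  covers : ∀ v : V, ∃ t, v ∈ B t
  edges : ∀ u v : V, G.Adj u v → (∃ t, u ∈ B t ∧ v ∈ B t) ∨
    (∃ s t, T.Adj s t ∧ B s \ B t = {u} ∧ B t \ B s = {v})
  interp : ∀ t₁ t₂ t₃ : τ, ∀ p : T.Walk t₁ t₃, p.IsPath → t₂ ∈ p.support →
    B t₁ ∩ B t₃ ⊆ B t₂

/-- `(B 0, …, B (n-1))` is a pseudo-path-decomposition of `G`. -/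
structure IsPseudoPathDecomp {V : Type} (G : SimpleGraph V) {n : ℕ}
    (B : Fin n → Set V) : Prop where
  covers : ∀ v : V, ∃ i, v ∈ B i
  edges : ∀ u v : V, G.Adj u v → (∃ i, u ∈ B i ∧ v ∈ B i) ∨
    (∃ i : Fin n, ∃ hi : i.1 + 1 < n,
      B i \ B ⟨i.1 + 1, hi⟩ = {u} ∧ B ⟨i.1 + 1, hi⟩ \ B i = {v})
  interp : ∀ i j l : Fin n, i ≤ j → j ≤ l → B i ∩ B l ⊆ B j

/-- `(B 0, …, B (n-1))` is a path-decomposition of `G`. -/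
structure IsPathDecomp {V : Type} (G : SimpleGraph V) {n : ℕ}
    (B : Fin n → Set V) : Prop where
  covers : ∀ v : V, ∃ i, v ∈ B i
  edges : ∀ u v : V, G.Adj u v → ∃ i, u ∈ B i ∧ v ∈ B i
  interp : ∀ i j l : Fin n, i ≤ j → j ≤ l → B i ∩ B l ⊆ B j

/-- `G` has a tree-decomposition in which every bag has at most `k` vertices
(i.e. tree-width at most `k - 1`). -/
def TreewidthBagLE {V : Type} (G : SimpleGraph V) (k : ℕ) : Prop :=
  ∃ (τ : Type) (T : SimpleGraph τ) (B : τ → Set V),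
    IsTreeDecomp G T B ∧ ∀ t, (B t).encard ≤ k

/-- `G` has a pseudo-tree-decomposition in which every bag has at most `k` vertices
(i.e. pseudo-tree-width at most `k - 1`). -/
def PseudoTreewidthBagLE {V : Type} (G : SimpleGraph V) (k : ℕ) : Prop :=
  ∃ (τ : Type) (T : SimpleGraph τ) (B : τ → Set V),
    IsPseudoTreeDecomp G T B ∧ ∀ t, (B t).encard ≤ k

namespace QIT

variable {V : Type} (G : SimpleGraph V) (v₀ : V)

noncomputable def lv (v : V) : ℕ := G.dist v₀ v

def Rel (u v : V) : Prop :=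
  lv G v₀ u = lv G v₀ v ∧ ∃ p : G.Walk u v, ∀ x ∈ p.support, lv G v₀ u ≤ lv G v₀ x

variable {G v₀}

lemma rel_refl (v : V) : Rel G v₀ v v := ⟨rfl, .nil, by simp⟩

lemma rel_symm {u v : V} (h : Rel G v₀ u v) : Rel G v₀ v u := by
  obtain ⟨h1, p, hp⟩ := h
  refine ⟨h1.symm, p.reverse, fun x hx => ?_⟩
  rw [← h1]
  exact hp x (by simpa [Walk.support_reverse] using hx)

lemma rel_trans {u v w : V} (h : Rel G v₀ u v) (h' : Rel G v₀ v w) : Rel G v₀ u w := by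
  obtain ⟨h1, p, hp⟩ := h; obtain ⟨h2, q, hq⟩ := h'
  refine ⟨h1.trans h2, p.append q, fun x hx => ?_⟩
  rcases (Walk.mem_support_append_iff _ _).mp hx with h | h
  · exact hp x h
  · exact h1 ▸ hq x h

variable (G v₀) in
def st : Setoid V := ⟨Rel G v₀, ⟨rel_refl, rel_symm, rel_trans⟩⟩

variable (G v₀) in
def QV := Quotient (st G v₀)

variable (G v₀) in
def qk (v : V) : QV G v₀ := Quotient.mk (st G v₀) v

lemma qk_eq_iff {u v : V} : qk G v₀ u = qk G v₀ v ↔ Rel G v₀ u v :=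
  ⟨fun h => Quotient.exact h, fun h => Quotient.sound h⟩

/-- prefix/suffix walk existence with length bounds -/
lemma exists_take {u v : V} (p : G.Walk u v) (i : ℕ) :
    ∃ q : G.Walk u (p.getVert i), q.length ≤ i := by
  induction p generalizing i with
  | nil => exact ⟨Walk.nil.copy rfl (by cases i <;> rfl), by simp⟩
  | @cons a c w h p ih =>
    cases i with
    | zero => exact ⟨Walk.nil.copy rfl (by simp), by simp⟩
    | succ j =>
      obtain ⟨q, hq⟩ := ih j
      exact ⟨(q.cons h).copy rfl (by simp), by simpa using Nat.succ_le_succ hq⟩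

lemma exists_drop {u v : V} (p : G.Walk u v) (i : ℕ) :
    ∃ q : G.Walk (p.getVert i) v, q.length ≤ p.length - i := by
  induction p generalizing i with
  | nil => exact ⟨Walk.nil.copy (by cases i <;> rfl) rfl, by simp⟩
  | @cons a c w h p ih =>
    cases i with
    | zero => exact ⟨(p.cons h).copy (by simp) rfl, by simp⟩
    | succ j =>
      obtain ⟨q, hq⟩ := ih j
      exact ⟨q.copy (by simp) rfl, by simpa using hq⟩

lemma dist_getVert_left {u v : V} (p : G.Walk u v) (i : ℕ) :
    G.dist u (p.getVert i) ≤ i := by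
  obtain ⟨q, hq⟩ := exists_take p i
  exact (SimpleGraph.dist_le q).trans hq

lemma dist_getVert_right {u v : V} (p : G.Walk u v) (i : ℕ) :
    G.dist (p.getVert i) v ≤ p.length - i := by
  obtain ⟨q, hq⟩ := exists_drop p i
  exact (SimpleGraph.dist_le q).trans hq



lemma lv_lipschitz {u v : V} (hconn : G.Connected) (h : G.Adj u v) :
    lv G v₀ v ≤ lv G v₀ u + 1 := by
  have := hconn.dist_triangle (u := v₀) (v := u) (w := v)
  have h1 : G.dist u v ≤ 1 := by
    simpa using SimpleGraph.dist_le h.toWalk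
  unfold lv
  omega

open Classical in
variable (G v₀) in
noncomputable def parV (v : V) : V :=
  if h : ∃ u, G.Adj u v ∧ lv G v₀ u + 1 = lv G v₀ v then h.choose else v

lemma parV_eq_self {v : V} (h : lv G v₀ v = 0) : parV G v₀ v = v := by
  rw [parV, dif_neg]
  rintro ⟨u, -, hu⟩
  omega

lemma parV_spec (hconn : G.Connected) {v : V} (hv : lv G v₀ v ≠ 0) :
    G.Adj (parV G v₀ v) v ∧ lv G v₀ (parV G v₀ v) + 1 = lv G v₀ v := by
  have hex : ∃ u, G.Adj u v ∧ lv G v₀ u + 1 = lv G v₀ v := by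
    obtain ⟨p, hp⟩ := hconn.exists_walk_length_eq_dist v₀ v
    set n := lv G v₀ v with hn
    have hlen : p.length = n := hp
    refine ⟨p.getVert (n - 1), ?_, ?_⟩
    · have := p.adj_getVert_succ (i := n - 1) (by omega)
      have hnv : p.getVert (n - 1 + 1) = v := by
        rw [show n - 1 + 1 = n by omega, ← hlen]
        exact p.getVert_length
      rwa [hnv] at this
    · have h1 : G.dist v₀ (p.getVert (n - 1)) ≤ n - 1 := dist_getVert_left p _
      have h2 : G.dist (p.getVert (n - 1)) v ≤ 1 := by
        have := dist_getVert_right p (n - 1); omega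
      have h3 := hconn.dist_triangle (u := v₀) (v := p.getVert (n - 1)) (w := v)
      unfold lv at *
      omega
  rw [parV, dif_pos hex]
  exact hex.choose_spec

lemma parV_rel (hconn : G.Connected) {u v : V} (h : Rel G v₀ u v) :
    Rel G v₀ (parV G v₀ u) (parV G v₀ v) := by
  by_cases h0 : lv G v₀ u = 0
  · have h0' : lv G v₀ v = 0 := h.1 ▸ h0
    rw [parV_eq_self h0, parV_eq_self h0']
    exact h
  · have h0' : lv G v₀ v ≠ 0 := h.1 ▸ h0
    obtain ⟨hadj_u, hlv_u⟩ := parV_spec hconn h0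
    obtain ⟨hadj_v, hlv_v⟩ := parV_spec hconn h0'
    obtain ⟨h1, p, hp⟩ := h
    refine ⟨by omega, (p.cons hadj_u).append hadj_v.symm.toWalk, fun x hx => ?_⟩
    have hx' : x = parV G v₀ u ∨ x ∈ p.support ∨ (x = v ∨ x = parV G v₀ v) := by
      rcases (Walk.mem_support_append_iff _ _).mp hx with hx | hx
      · rcases List.mem_cons.mp (by simpa [Walk.support_cons] using hx) with hx | hx
        · exact .inl hx
        · exact .inr (.inl hx)
      · refine .inr (.inr ?_)
        simpa [Adj.toWalk] using hx
    rcases hx' with rfl | hx' | rfl | rfl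
    · omega
    · have := hp x hx'; omega
    · omega
    · omega

variable (G v₀) in
noncomputable def par (hconn : G.Connected) : QV G v₀ → QV G v₀ :=
  Quotient.lift (fun v => qk G v₀ (parV G v₀ v))
    (fun _ _ h => Quotient.sound (parV_rel hconn h))

variable (G v₀) in
noncomputable def lev : QV G v₀ → ℕ :=
  Quotient.lift (lv G v₀) (fun _ _ h => h.1)

section tree

lemma par_qk (hconn : G.Connected) (v : V) : par G v₀ hconn (qk G v₀ v) = qk G v₀ (parV G v₀ v) := rfl

lemma lev_qk (v : V) : lev G v₀ (qk G v₀ v) = lv G v₀ v := rfl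

lemma lev_par (hconn : G.Connected) {a : QV G v₀} (ha : lev G v₀ a ≠ 0) :
    lev G v₀ (par G v₀ hconn a) + 1 = lev G v₀ a := by
  induction a using Quotient.ind with
  | _ v => exact (parV_spec hconn ha).2

lemma par_of_lev_zero (hconn : G.Connected) {a : QV G v₀} (ha : lev G v₀ a = 0) :
    par G v₀ hconn a = a := by
  induction a using Quotient.ind with
  | _ v => exact congrArg (qk G v₀) (parV_eq_self ha)

variable (G v₀) in
noncomputable def S (hconn : G.Connected) : SimpleGraph (QV G v₀) :=
  SimpleGraph.fromRel (fun a b => a = par G v₀ hconn b ∧ lev G v₀ b ≠ 0)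

lemma s_adj (hconn : G.Connected) {a b : QV G v₀} :
    (S G v₀ hconn).Adj a b ↔ a ≠ b ∧
      ((a = par G v₀ hconn b ∧ lev G v₀ b ≠ 0) ∨ (b = par G v₀ hconn a ∧ lev G v₀ a ≠ 0)) := by
  rfl

lemma adj_par (hconn : G.Connected) {a : QV G v₀} (ha : lev G v₀ a ≠ 0) :
    (S G v₀ hconn).Adj a (par G v₀ hconn a) := by
  rw [s_adj]
  refine ⟨fun h => ?_, .inr ⟨rfl, ha⟩⟩
  have := lev_par hconn ha
  rw [← h] at this
  omega

lemma lv_eq_zero (hconn : G.Connected) {v : V} (h : lv G v₀ v = 0) : v = v₀ := by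
  have := (hconn.dist_eq_zero_iff (u := v₀) (v := v)).mp h
  exact this.symm

lemma reach_root (hconn : G.Connected) (a : QV G v₀) : (S G v₀ hconn).Reachable a (qk G v₀ v₀) := by
  suffices H : ∀ n a, lev G v₀ a = n → (S G v₀ hconn).Reachable a (qk G v₀ v₀) by
    exact H _ a rfl
  intro n
  induction n using Nat.strong_induction_on with
  | _ n ih =>
    intro a ha
    by_cases h0 : lev G v₀ a = 0
    · induction a using Quotient.ind with
      | _ v =>
        rw [show v = v₀ from lv_eq_zero hconn h0]
        exact Reachable.refl _
    · refine (adj_par hconn h0).reachable.trans (ih (lev G v₀ (par G v₀ hconn a)) ?_ _ rfl)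
      have := lev_par hconn h0
      omega

lemma s_connected (hconn : G.Connected) : (S G v₀ hconn).Connected := by
  have : Nonempty (QV G v₀) := ⟨qk G v₀ v₀⟩
  refine ⟨fun a b => (reach_root hconn a).trans (reach_root hconn b).symm⟩

/-- parent iteration: level drops -/
lemma lev_iter (hconn : G.Connected) (j : ℕ) (a : QV G v₀) :
    lev G v₀ ((par G v₀ hconn)^[j] a) = lev G v₀ a - j := by
  induction j generalizing a with
  | zero => simp
  | succ j ih =>
    rw [Function.iterate_succ_apply']
    by_cases h0 : lev G v₀ ((par G v₀ hconn)^[j] a) = 0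
    · rw [par_of_lev_zero hconn h0, h0]
      have := ih a
      omega
    · have := lev_par hconn h0
      rw [ih] at *
      omega

lemma iter_min (hconn : G.Connected) (j : ℕ) (a : QV G v₀) :
    (par G v₀ hconn)^[j] a = (par G v₀ hconn)^[min j (lev G v₀ a)] a := by
  induction j with
  | zero => simp
  | succ j ih =>
    by_cases h : j + 1 ≤ lev G v₀ a
    · rw [min_eq_left h]
    · have hj : lev G v₀ a ≤ j := by omega
      rw [min_eq_right (by omega), Function.iterate_succ_apply', ih, min_eq_right hj]
      apply par_of_lev_zero
      rw [lev_iter]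
      omega

/-- from a walk in S, common ancestor data -/
lemma walk_anc (hconn : G.Connected) {a b : QV G v₀} (w : (S G v₀ hconn).Walk a b) :
    ∃ j₁ j₂, j₁ + j₂ ≤ w.length ∧
      (par G v₀ hconn)^[j₁] a = (par G v₀ hconn)^[j₂] b := by
  induction w with
  | nil => exact ⟨0, 0, by simp, rfl⟩
  | @cons a c b hadj w ih =>
    obtain ⟨j₁, j₂, hj, he⟩ := ih
    rw [s_adj] at hadj
    rcases hadj.2 with ⟨hc, -⟩ | ⟨hc, -⟩
    · -- a = par c
      cases j₁ with
      | zero =>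
        simp only [Function.iterate_zero_apply] at he
        refine ⟨0, j₂ + 1, by simp only [Walk.length_cons]; omega, ?_⟩
        simp only [Function.iterate_zero_apply, Function.iterate_succ_apply', ← he, hc]
      | succ j =>
        refine ⟨j, j₂, by simp only [Walk.length_cons]; omega, ?_⟩
        rw [← he, hc, ← Function.iterate_succ_apply]
    · -- c = par a
      refine ⟨j₁ + 1, j₂, by simp only [Walk.length_cons]; omega, ?_⟩
      rw [Function.iterate_succ_apply, ← hc, he]

/-- descendant invariant -/
lemma walk_D (hconn : G.Connected) (a : QV G v₀) {x y : QV G v₀}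
    (q : (S G v₀ hconn).Walk x y)
    (hav : s(a, par G v₀ hconn a) ∉ q.edges)
    (hx : lev G v₀ a ≤ lev G v₀ x ∧
      (par G v₀ hconn)^[lev G v₀ x - lev G v₀ a] x = a) :
    lev G v₀ a ≤ lev G v₀ y ∧
      (par G v₀ hconn)^[lev G v₀ y - lev G v₀ a] y = a := by
  induction q with
  | nil => exact hx
  | @cons x z y hadj q ih =>
    rw [Walk.edges_cons, List.mem_cons] at hav
    push_neg at hav
    refine ih hav.2 ?_
    rw [s_adj] at hadj
    rcases hadj.2 with ⟨hc, hz⟩ | ⟨hc, hz⟩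
    · -- x = par z, lev z ≠ 0 : z is the child of x
      have hlz := lev_par hconn hz
      rw [← hc] at hlz
      refine ⟨by omega, ?_⟩
      have h2 : lev G v₀ z - lev G v₀ a = (lev G v₀ x - lev G v₀ a) + 1 := by omega
      rw [h2, Function.iterate_succ_apply, ← hc]
      exact hx.2
    · -- z = par x, lev x ≠ 0 : x is the child of z
      have hlz := lev_par hconn hz
      rw [← hc] at hlz
      by_cases hxa : lev G v₀ x = lev G v₀ a
      · exfalso
        have hxe : x = a := by
          have := hx.2
          rwa [hxa, Nat.sub_self, Function.iterate_zero_apply] at this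
        exact hav.1 (by rw [hc, hxe])
      · have h1 : lev G v₀ a < lev G v₀ x := by omega
        have h2 : lev G v₀ x - lev G v₀ a = (lev G v₀ z - lev G v₀ a) + 1 := by omega
        have h3 := hx.2
        rw [h2, Function.iterate_succ_apply, ← hc] at h3
        exact ⟨by omega, h3⟩

lemma no_walk (hconn : G.Connected) {a : QV G v₀} (ha : lev G v₀ a ≠ 0)
    (p : (S G v₀ hconn).Walk a (par G v₀ hconn a)) :
    s(a, par G v₀ hconn a) ∈ p.edges := by
  by_contra hne
  have := walk_D (v₀ := v₀) hconn a p hne ⟨le_refl _, by simp⟩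
  have h2 := lev_par hconn ha
  omega

lemma s_acyclic (hconn : G.Connected) : (S G v₀ hconn).IsAcyclic := by
  rw [isAcyclic_iff_forall_edge_isBridge]
  intro e he
  induction e with
  | _ a b =>
    rw [mem_edgeSet] at he
    have key : ∀ (c d : QV G v₀), (S G v₀ hconn).Adj c d → d = par G v₀ hconn c →
        lev G v₀ c ≠ 0 → (S G v₀ hconn).IsBridge s(c, d) := by
      intro c d hadj hd hc
      rw [isBridge_iff]
      rw [reachable_delete_edges_iff_exists_walk]
      rintro ⟨p, hp⟩
      subst hd
      exact hp (no_walk hconn hc p)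
    rcases (s_adj hconn).mp he |>.2 with ⟨hc, hz⟩ | ⟨hc, hz⟩
    · rw [Sym2.eq_swap]
      exact key b a he.symm hc hz
    · exact key a b he hc hz

lemma par_adj_level (hconn : G.Connected) {x y : V} (h : G.Adj x y)
    (hl : lv G v₀ x + 1 = lv G v₀ y) :
    par G v₀ hconn (qk G v₀ y) = qk G v₀ x := by
  rw [par_qk, qk_eq_iff]
  have hy0 : lv G v₀ y ≠ 0 := by omega
  obtain ⟨hadj, hspec⟩ := parV_spec hconn hy0
  refine ⟨by omega, (Walk.cons h.symm Walk.nil).cons hadj, fun z hz => ?_⟩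
  have : z = parV G v₀ y ∨ z = y ∨ z = x := by
    simpa [Walk.support_cons] using hz
  rcases this with rfl | rfl | rfl <;> omega

lemma s_dist_adj (hconn : G.Connected) {x y : V} (h : G.Adj x y) :
    (S G v₀ hconn).dist (qk G v₀ x) (qk G v₀ y) ≤ 1 := by
  have l1 := lv_lipschitz (v₀ := v₀) hconn h
  have l2 := lv_lipschitz (v₀ := v₀) hconn h.symm
  have htri : lv G v₀ x = lv G v₀ y ∨ lv G v₀ x + 1 = lv G v₀ y ∨
      lv G v₀ y + 1 = lv G v₀ x := by omega
  rcases htri with he | he | he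
  · have : qk G v₀ x = qk G v₀ y := by
      rw [qk_eq_iff]
      refine ⟨he, Walk.cons h Walk.nil, fun z hz => ?_⟩
      have : z = x ∨ z = y := by simpa [Walk.support_cons] using hz
      rcases this with rfl | rfl <;> omega
    rw [this, SimpleGraph.dist_self]
    omega
  · have hadj : (S G v₀ hconn).Adj (qk G v₀ x) (qk G v₀ y) := by
      rw [s_adj]
      refine ⟨fun hc => by have := (qk_eq_iff.mp hc).1; omega, .inl ?_⟩
      exact ⟨(par_adj_level hconn h he).symm, by simpa [lev_qk] using by omega⟩
    simpa using SimpleGraph.dist_le hadj.toWalk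
  · have hadj : (S G v₀ hconn).Adj (qk G v₀ x) (qk G v₀ y) := by
      rw [s_adj]
      refine ⟨fun hc => by have := (qk_eq_iff.mp hc).1; omega, .inr ?_⟩
      exact ⟨(par_adj_level hconn h.symm he).symm, by simpa [lev_qk] using by omega⟩
    simpa using SimpleGraph.dist_le hadj.toWalk

lemma s_dist_le_walk (hconn : G.Connected) {u v : V} (p : G.Walk u v) :
    (S G v₀ hconn).dist (qk G v₀ u) (qk G v₀ v) ≤ p.length := by
  induction p with
  | nil => simp
  | @cons u c v h q ih =>
    have htri := (s_connected hconn).dist_triangle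
      (u := qk G v₀ u) (v := qk G v₀ c) (w := qk G v₀ v)
    have h1 := s_dist_adj (v₀ := v₀) hconn h
    rw [Walk.length_cons]
    omega

lemma lv_getVert (hconn : G.Connected) {u : V} (p : G.Walk v₀ u)
    (hp : p.length = lv G v₀ u) {i : ℕ} (hi : i ≤ p.length) :
    lv G v₀ (p.getVert i) = i := by
  have h1 := dist_getVert_left p i
  have h2 := dist_getVert_right p i
  have h3 := hconn.dist_triangle (u := v₀) (v := p.getVert i) (w := u)
  unfold lv at *
  omega

lemma anc_geo (hconn : G.Connected) {u : V} (p : G.Walk v₀ u)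
    (hp : p.length = lv G v₀ u) {j : ℕ} (hj : j ≤ lv G v₀ u) :
    (par G v₀ hconn)^[j] (qk G v₀ u) = qk G v₀ (p.getVert (lv G v₀ u - j)) := by
  induction j with
  | zero =>
    rw [Function.iterate_zero_apply, Nat.sub_zero, ← hp, Walk.getVert_length]
  | succ j ih =>
    rw [Function.iterate_succ_apply', ih (by omega)]
    have hlt : lv G v₀ u - (j + 1) < p.length := by omega
    have hadj := p.adj_getVert_succ hlt
    have hstep : lv G v₀ u - (j + 1) + 1 = lv G v₀ u - j := by omega
    rw [hstep] at hadj
    have h1 : lv G v₀ (p.getVert (lv G v₀ u - (j+1))) = lv G v₀ u - (j+1) :=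
      lv_getVert hconn p hp (by omega)
    have h2 : lv G v₀ (p.getVert (lv G v₀ u - j)) = lv G v₀ u - j :=
      lv_getVert hconn p hp (by omega)
    exact par_adj_level hconn hadj (by omega)

section decomp
variable {τ : Type} {T : SimpleGraph τ} {B : τ → Set V}

lemma sep (hdec : IsTreeDecomp G T B) {a b : V} (W : G.Walk a b) :
    ∀ {ta tb : τ}, a ∈ B ta → b ∈ B tb → ∀ (q : T.Walk ta tb), q.IsPath →
      (∀ t ∈ q.support, ∃ x ∈ W.support, x ∈ B t) ∧
      (∀ t t', s(t, t') ∈ q.edges → ∃ x ∈ W.support, x ∈ B t ∧ x ∈ B t') := by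
  classical
  induction W with
  | nil =>
    intro ta tb ha hb q hq
    refine ⟨fun t ht => ⟨_, by simp, hdec.interp ta t tb q hq ht ⟨ha, hb⟩⟩,
      fun t t' he => ⟨_, by simp,
        hdec.interp ta t tb q hq (q.fst_mem_support_of_mem_edges he) ⟨ha, hb⟩,
        hdec.interp ta t' tb q hq (q.snd_mem_support_of_mem_edges he) ⟨ha, hb⟩⟩⟩
  | @cons a c b hadj W' ih =>
    intro ta tb ha hb q hq
    obtain ⟨s, has, hcs⟩ := hdec.edges _ _ hadj
    obtain ⟨w1⟩ := hdec.isTree.1 ta s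
    obtain ⟨w2⟩ := hdec.isTree.1 s tb
    have hq_eq : (⟨q, hq⟩ : T.Path ta tb) = (w1.toPath.val.append w2.toPath.val).toPath :=
      hdec.isTree.2.path_unique _ _
    have hq_walk : q = ((w1.toPath.val.append w2.toPath.val).toPath : T.Walk ta tb) :=
      congrArg Subtype.val hq_eq
    have hsupp : ∀ t ∈ q.support, t ∈ w1.toPath.val.support ∨ t ∈ w2.toPath.val.support := by
      intro t ht
      rw [hq_walk] at ht
      have := Walk.support_toPath_subset _ ht
      exact (Walk.mem_support_append_iff _ _).mp this
    have hedg : ∀ e ∈ q.edges, e ∈ w1.toPath.val.edges ∨ e ∈ w2.toPath.val.edges := by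
      intro e he
      rw [hq_walk] at he
      have := Walk.edges_toPath_subset _ he
      rw [Walk.edges_append, List.mem_append] at this
      exact this
    have ih2 := ih hcs hb w2.toPath.val w2.toPath.2
    constructor
    · intro t ht
      rcases hsupp t ht with ht | ht
      · exact ⟨a, Walk.start_mem_support _,
          hdec.interp ta t s w1.toPath.val w1.toPath.2 ht ⟨ha, has⟩⟩
      · obtain ⟨x, hx, hxB⟩ := ih2.1 t ht
        exact ⟨x, by simp [Walk.support_cons, hx], hxB⟩
    · intro t t' he
      rcases hedg _ he with he' | he'
      · refine ⟨a, Walk.start_mem_support _,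
          hdec.interp ta t s w1.toPath.val w1.toPath.2
            (Walk.fst_mem_support_of_mem_edges _ he') ⟨ha, has⟩,
          hdec.interp ta t' s w1.toPath.val w1.toPath.2
            (Walk.snd_mem_support_of_mem_edges _ he') ⟨ha, has⟩⟩
      · obtain ⟨x, hx, hxB⟩ := ih2.2 t t' he'
        exact ⟨x, by simp [Walk.support_cons, hx], hxB⟩

lemma ivt {A Bp : τ → Prop} : ∀ {ta tb : τ} (q : T.Walk ta tb),
    (∀ t ∈ q.support, A t ∨ Bp t) → A ta → Bp tb →
    (∃ t ∈ q.support, A t ∧ Bp t) ∨ (∃ t t', s(t, t') ∈ q.edges ∧ A t ∧ Bp t') := by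
  intro ta tb q
  induction q with
  | nil => exact fun _ h1 h2 => .inl ⟨_, by simp, h1, h2⟩
  | @cons ta c tb h q ih =>
    intro hall h1 h2
    by_cases hBta : Bp ta
    · exact .inl ⟨ta, by simp, h1, hBta⟩
    · rcases hall c (by simp) with hc | hc
      · rcases ih (fun t ht => hall t (by simp [ht])) hc h2 with ⟨t, ht, hAB⟩ | ⟨t, t', ht, hAB⟩
        · exact .inl ⟨t, by simp [ht], hAB⟩
        · exact .inr ⟨t, t', by simp [Walk.edges_cons, ht], hAB⟩
      · exact .inr ⟨ta, c, by simp, h1, hc⟩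

lemma same_class (hconn : G.Connected) (hdec : IsTreeDecomp G T B) {r : ℕ}
    (hB : ∀ t, ∀ x ∈ B t, ∀ y ∈ B t, G.dist x y ≤ r)
    {w₁ w₂ : V} (hrel : Rel G v₀ w₁ w₂) :
    G.dist w₁ w₂ ≤ 4 * r := by
  classical
  obtain ⟨hlv, P, hP⟩ := hrel
  set n := lv G v₀ w₁ with hn
  obtain ⟨p₁, hp₁⟩ := hconn.exists_walk_length_eq_dist v₀ w₁
  obtain ⟨p₂, hp₂⟩ := hconn.exists_walk_length_eq_dist v₀ w₂
  set Q : G.Walk w₁ w₂ := p₁.reverse.append p₂ with hQdef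
  have hQ : ∀ y ∈ Q.support, G.dist y w₁ + lv G v₀ y ≤ n ∨ G.dist y w₂ + lv G v₀ y ≤ n := by
    intro y hy
    rcases (Walk.mem_support_append_iff _ _).mp hy with hy | hy
    · rw [Walk.support_reverse, List.mem_reverse] at hy
      obtain ⟨i, hyi, hile⟩ := Walk.mem_support_iff_exists_getVert.mp hy
      left
      have h1 := dist_getVert_left p₁ i
      have h2 := dist_getVert_right p₁ i
      have hl1 : p₁.length = n := hp₁
      rw [← hyi]
      unfold lv
      omega
    · obtain ⟨i, hyi, hile⟩ := Walk.mem_support_iff_exists_getVert.mp hy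
      right
      have h1 := dist_getVert_left p₂ i
      have h2 := dist_getVert_right p₂ i
      have hl2 : p₂.length = lv G v₀ w₂ := hp₂
      rw [← hyi]
      unfold lv
      omega
  obtain ⟨ta, hta⟩ := hdec.covers w₁
  obtain ⟨tb, htb⟩ := hdec.covers w₂
  obtain ⟨qw⟩ := hdec.isTree.1 ta tb
  have hsepP := sep hdec P hta htb qw.toPath.val qw.toPath.2
  have hsepQ := sep hdec Q hta htb qw.toPath.val qw.toPath.2
  set A := fun t => ∃ y ∈ B t, G.dist y w₁ ≤ r with hA
  set Bp := fun t => ∃ y ∈ B t, G.dist y w₂ ≤ r with hBp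
  have hAB : ∀ t ∈ qw.toPath.val.support, A t ∨ Bp t := by
    intro t ht
    obtain ⟨x, hxP, hxB⟩ := hsepP.1 t ht
    obtain ⟨y, hyQ, hyB⟩ := hsepQ.1 t ht
    have hxy : G.dist x y ≤ r := hB t x hxB y hyB
    have hx_lv : n ≤ lv G v₀ x := hP x hxP
    have hlip : lv G v₀ x ≤ lv G v₀ y + G.dist y x := by
      have := hconn.dist_triangle (u := v₀) (v := y) (w := x)
      unfold lv; omega
    have hcomm : G.dist y x = G.dist x y := SimpleGraph.dist_comm
    rcases hQ y hyQ with h | h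
    · exact .inl ⟨y, hyB, by omega⟩
    · exact .inr ⟨y, hyB, by omega⟩
  have hAta : A ta := ⟨w₁, hta, by rw [SimpleGraph.dist_self]; omega⟩
  have hBtb : Bp tb := ⟨w₂, htb, by rw [SimpleGraph.dist_self]; omega⟩
  rcases ivt qw.toPath.val hAB hAta hBtb with
    ⟨t, ht, ⟨y₁, hy₁, d₁⟩, ⟨y₂, hy₂, d₂⟩⟩ | ⟨t, t', he, ⟨y₁, hy₁, d₁⟩, ⟨y₂, hy₂, d₂⟩⟩
  · have h12 : G.dist y₁ y₂ ≤ r := hB t y₁ hy₁ y₂ hy₂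
    have t1 := hconn.dist_triangle (u := w₁) (v := y₁) (w := w₂)
    have t2 := hconn.dist_triangle (u := y₁) (v := y₂) (w := w₂)
    have c1 : G.dist w₁ y₁ = G.dist y₁ w₁ := SimpleGraph.dist_comm
    have c2 : G.dist y₂ w₂ = G.dist w₂ y₂ := SimpleGraph.dist_comm
    omega
  · obtain ⟨z, hzP, hzt, hzt'⟩ := hsepP.2 t t' he
    have h1z : G.dist y₁ z ≤ r := hB t y₁ hy₁ z hzt
    have hz2 : G.dist z y₂ ≤ r := hB t' z hzt' y₂ hy₂
    have t1 := hconn.dist_triangle (u := w₁) (v := y₁) (w := w₂)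
    have t2 := hconn.dist_triangle (u := y₁) (v := z) (w := w₂)
    have t3 := hconn.dist_triangle (u := z) (v := y₂) (w := w₂)
    have c1 : G.dist w₁ y₁ = G.dist y₁ w₁ := SimpleGraph.dist_comm
    have c2 : G.dist y₂ w₂ = G.dist w₂ y₂ := SimpleGraph.dist_comm
    omega

end decomp
end tree

lemma edist_eq_dist' {W : Type} {H : SimpleGraph W} {x y : W} (h : H.Reachable x y) :
    H.edist x y = (H.dist x y : ℕ∞) :=
  (ENat.coe_toNat (by rwa [edist_ne_top_iff_reachable])).symm

lemma dist_le_of_edist_le {u v : V} {r : ℕ} (h : G.edist u v ≤ (r : ℕ∞)) :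
    G.dist u v ≤ r := by
  have := ENat.toNat_le_toNat h (by simp)
  simpa [SimpleGraph.dist] using this

end QIT

theorem stmt16 (r : ℕ) {V τ : Type} (G : SimpleGraph V) (hconn : G.Connected)
    (T : SimpleGraph τ) (B : τ → Set V) (hdec : IsTreeDecomp G T B)
    (hdiam : ∀ t, ∀ u ∈ B t, ∀ v ∈ B t, G.edist u v ≤ (r : ℕ∞)) :
    ∃ (σ : Type) (S : SimpleGraph σ) (φ : V → σ),
      S.IsTree ∧ IsQuasiIsometry G S 1 (6 * r + 1) φ := by
  obtain ⟨v₀⟩ := hconn.nonempty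
  have hB : ∀ t, ∀ x ∈ B t, ∀ y ∈ B t, G.dist x y ≤ r :=
    fun t x hx y hy => QIT.dist_le_of_edist_le (hdiam t x hx y hy)
  have hSconn := QIT.s_connected (v₀ := v₀) hconn
  refine ⟨QIT.QV G v₀, QIT.S G v₀ hconn, QIT.qk G v₀,
    (isTree_iff _).mpr ⟨hSconn, QIT.s_acyclic hconn⟩, ?_, ?_, ?_⟩
  · -- upper bound
    intro u v _
    obtain ⟨p, hp⟩ := hconn.exists_walk_length_eq_dist u v
    have hle : (QIT.S G v₀ hconn).dist (QIT.qk G v₀ u) (QIT.qk G v₀ v) ≤ G.dist u v := by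
      have := QIT.s_dist_le_walk (v₀ := v₀) hconn p
      omega
    rw [QIT.edist_eq_dist' (hSconn _ _), QIT.edist_eq_dist' (hconn u v)]
    exact_mod_cast (show (QIT.S G v₀ hconn).dist (QIT.qk G v₀ u) (QIT.qk G v₀ v) ≤
      1 * G.dist u v + (6 * r + 1) by omega)
  · -- lower bound
    intro u v _
    set k := (QIT.S G v₀ hconn).dist (QIT.qk G v₀ u) (QIT.qk G v₀ v) with hk
    obtain ⟨w, hw⟩ := hSconn.exists_walk_length_eq_dist (QIT.qk G v₀ u) (QIT.qk G v₀ v)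
    obtain ⟨j₁, j₂, hj, hanc⟩ := QIT.walk_anc hconn w
    rw [hw] at hj
    set i₁ := min j₁ (QIT.lv G v₀ u) with hi₁
    set i₂ := min j₂ (QIT.lv G v₀ v) with hi₂
    have h₁ : (QIT.par G v₀ hconn)^[i₁] (QIT.qk G v₀ u) =
        (QIT.par G v₀ hconn)^[i₂] (QIT.qk G v₀ v) := by
      have e1 := QIT.iter_min (v₀ := v₀) hconn j₁ (QIT.qk G v₀ u)
      have e2 := QIT.iter_min (v₀ := v₀) hconn j₂ (QIT.qk G v₀ v)
      rw [e1, e2] at hanc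
      exact hanc
    obtain ⟨p₁, hp₁⟩ := hconn.exists_walk_length_eq_dist v₀ u
    obtain ⟨p₂, hp₂⟩ := hconn.exists_walk_length_eq_dist v₀ v
    have hl₁ : p₁.length = QIT.lv G v₀ u := hp₁
    have hl₂ : p₂.length = QIT.lv G v₀ v := hp₂
    have hg₁ := QIT.anc_geo hconn p₁ hl₁ (j := i₁) (by omega)
    have hg₂ := QIT.anc_geo hconn p₂ hl₂ (j := i₂) (by omega)
    rw [hg₁, hg₂] at h₁
    set x₁ := p₁.getVert (QIT.lv G v₀ u - i₁) with hx₁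
    set x₂ := p₂.getVert (QIT.lv G v₀ v - i₂) with hx₂
    have hrel : QIT.Rel G v₀ x₁ x₂ := QIT.qk_eq_iff.mp h₁
    have hmid : G.dist x₁ x₂ ≤ 4 * r := QIT.same_class hconn hdec hB hrel
    have hux : G.dist x₁ u ≤ i₁ := by
      have h := QIT.dist_getVert_right p₁ (QIT.lv G v₀ u - i₁)
      rw [← hx₁] at h
      omega
    have hvx : G.dist x₂ v ≤ i₂ := by
      have h := QIT.dist_getVert_right p₂ (QIT.lv G v₀ v - i₂)
      rw [← hx₂] at h
      omega
    have tri1 := hconn.dist_triangle (u := u) (v := x₁) (w := v)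
    have tri2 := hconn.dist_triangle (u := x₁) (v := x₂) (w := v)
    have c1 : G.dist u x₁ = G.dist x₁ u := SimpleGraph.dist_comm
    have c2 : G.dist x₂ v = G.dist x₂ v := rfl
    have hfin : G.dist u v ≤ k + (6 * r + 1) := by omega
    rw [QIT.edist_eq_dist' (hconn u v), QIT.edist_eq_dist' (hSconn _ _)]
    exact_mod_cast (show G.dist u v ≤
      1 * (QIT.S G v₀ hconn).dist (QIT.qk G v₀ u) (QIT.qk G v₀ v) + (6 * r + 1) by omega)
  · -- coarse surjectivity
    intro a
    obtain ⟨v, hv⟩ := Quotient.exists_rep a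
    refine ⟨v, ?_⟩
    rw [show QIT.qk G v₀ v = a from hv]
    simp
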